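/- Let I ⊆ ℝ be a nondegenerate interval and let F, G : I → ℝ be twice continuously differentiable functions with nowhere vanishing first derivatives. Then A[F](a) ≤ A[G](a) for every k ∈ ℕ and every tuple a ∈ I^k if and only if F''(x)/F'(x) ≤ G''(x)/G'(x) for all x ∈ I. -/

import Mathlib

open Set Filter Topology

/-- The quasiarithmetic mean generated by `F` on the interval `I`:
`A[F](a₁,…,a_k) = F⁻¹((F(a₁)+⋯+F(a_k))/k)`, where the inverse is taken on `I`. -/
noncomputable def qaMean (I : Set ℝ) (F : ℝ → ℝ) {k : ℕ} (a : Fin k → ℝ) : ℝ :=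
  Function.invFunOn F I ((∑ i, F (a i)) / k)

lemma mean_mem_image' {k : ℕ} {D : Set ℝ} (hD : Convex ℝ D) {F : ℝ → ℝ}
    (hFc : ContinuousOn F D) (a : Fin (k+1) → ℝ) (ha : ∀ i, a i ∈ D) :
    (∑ i, F (a i)) / ((k+1 : ℕ) : ℝ) ∈ F '' D := by
  have hn : (0:ℝ) < ((k+1 : ℕ) : ℝ) := by exact_mod_cast Nat.succ_pos k
  obtain ⟨i₀, -, h₀⟩ := Finset.exists_min_image Finset.univ (fun i => F (a i)) Finset.univ_nonempty
  obtain ⟨i₁, -, h₁⟩ := Finset.exists_max_image Finset.univ (fun i => F (a i)) Finset.univ_nonempty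
  have hlow : ((k+1 : ℕ) : ℝ) * F (a i₀) ≤ ∑ i, F (a i) := by
    have := Finset.card_nsmul_le_sum Finset.univ (fun i => F (a i)) (F (a i₀))
      (fun i _ => h₀ i (Finset.mem_univ i))
    simpa [Finset.card_univ, nsmul_eq_mul] using this
  have hup : (∑ i, F (a i)) ≤ ((k+1 : ℕ) : ℝ) * F (a i₁) := by
    have := Finset.sum_le_card_nsmul Finset.univ (fun i => F (a i)) (F (a i₁))
      (fun i _ => h₁ i (Finset.mem_univ i))
    simpa [Finset.card_univ, nsmul_eq_mul] using this
  have hJ : OrdConnected (F '' D) :=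
    ((Real.convex_iff_isPreconnected.1 hD).image F hFc).ordConnected
  exact hJ.out (Set.mem_image_of_mem F (ha i₀)) (Set.mem_image_of_mem F (ha i₁))
    ⟨(le_div_iff₀ hn).2 (by linarith), (div_le_iff₀ hn).2 (by linarith)⟩

lemma qa_core' {k : ℕ} (D : Set ℝ) (hD : Convex ℝ D)
    (F F' F'' G G' G'' : ℝ → ℝ) (ε δ : ℝ)
    (hεv : ε = 1 ∨ ε = -1) (hδv : δ = 1 ∨ δ = -1)
    (hF1 : ∀ x ∈ D, HasDerivWithinAt F (F' x) D x)
    (hF2 : ∀ x ∈ D, HasDerivWithinAt F' (F'' x) D x)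
    (hG1 : ∀ x ∈ D, HasDerivWithinAt G (G' x) D x)
    (hG2 : ∀ x ∈ D, HasDerivWithinAt G' (G'' x) D x)
    (hFs : ∀ x ∈ D, 0 < δ * F' x)
    (hGs : ∀ x ∈ D, 0 < ε * G' x)
    (hr : ∀ x ∈ D, F'' x / F' x ≤ G'' x / G' x)
    (a : Fin (k+1) → ℝ) (ha : ∀ i, a i ∈ D) :
    qaMean D F a ≤ qaMean D G a ∧
      ((∀ x ∈ D, F'' x / F' x < G'' x / G' x) → (∃ i j, a i ≠ a j) →
        qaMean D F a < qaMean D G a) := by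
  have hn : (0:ℝ) < ((k+1 : ℕ) : ℝ) := by exact_mod_cast Nat.succ_pos k
  have hF'ne : ∀ x ∈ D, F' x ≠ 0 := by
    intro x hx h
    have := hFs x hx; rw [h, mul_zero] at this; exact lt_irrefl 0 this
  have hG'ne : ∀ x ∈ D, G' x ≠ 0 := by
    intro x hx h
    have := hGs x hx; rw [h, mul_zero] at this; exact lt_irrefl 0 this
  have hFc : ContinuousOn F D := fun x hx => (hF1 x hx).continuousWithinAt
  have hGc : ContinuousOn G D := fun x hx => (hG1 x hx).continuousWithinAt
  -- the two mean points
  set mF : ℝ := (∑ i, F (a i)) / ((k+1 : ℕ) : ℝ) with hmF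
  set mG : ℝ := (∑ i, G (a i)) / ((k+1 : ℕ) : ℝ) with hmG
  have hmFD : mF ∈ F '' D := mean_mem_image' hD hFc a ha
  have hmGD : mG ∈ G '' D := mean_mem_image' hD hGc a ha
  set u : ℝ := Function.invFunOn F D mF with hudef
  set v : ℝ := Function.invFunOn G D mG with hvdef
  have hmFD' : ∃ x ∈ D, F x = mF := by rwa [Set.mem_image] at hmFD
  have hmGD' : ∃ x ∈ D, G x = mG := by rwa [Set.mem_image] at hmGD
  have hu : u ∈ D := Function.invFunOn_mem hmFD'
  have huF : F u = mF := Function.invFunOn_eq hmFD'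
  have hv : v ∈ D := Function.invFunOn_mem hmGD'
  have hvG : G v = mG := Function.invFunOn_eq hmGD'
  -- P = εδ G'/F' is positive with nonnegative derivative on D
  set P : ℝ → ℝ := fun x => ε * δ * (G' x / F' x) with hPdef
  have hPpos : ∀ x ∈ D, 0 < P x := by
    intro x hx
    have h1 : P x = (ε * G' x) * (δ * F' x) / (F' x) ^ 2 := by
      simp only [hPdef]; field_simp [hF'ne x hx]
    rw [h1]
    exact div_pos (mul_pos (hGs x hx) (hFs x hx)) (pow_two_pos_of_ne_zero (hF'ne x hx))
  have hPderiv : ∀ x ∈ D,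
      HasDerivWithinAt P (P x * (G'' x / G' x - F'' x / F' x)) D x := by
    intro x hx
    have h := ((hG2 x hx).div (hF2 x hx) (hF'ne x hx)).const_mul (ε * δ)
    refine h.congr_deriv ?_
    simp only [hPdef]
    field_simp [hF'ne x hx, hG'ne x hx]
  have hPc : ContinuousOn P D := fun x hx => (hPderiv x hx).continuousWithinAt
  have hPmono : MonotoneOn P D := by
    refine monotoneOn_of_hasDerivWithinAt_nonneg hD hPc
      (fun x hx => (hPderiv x (interior_subset hx)).mono interior_subset) ?_
    intro x hx
    exact mul_nonneg (hPpos x (interior_subset hx)).le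
      (sub_nonneg.2 (hr x (interior_subset hx)))
  -- the tangent-comparison function χ
  set c : ℝ := ε * (G' u / F' u) with hcdef
  set χ : ℝ → ℝ := fun x => ε * G x - c * F x with hχdef
  have hχderiv : ∀ x ∈ D, HasDerivWithinAt χ (δ * F' x * (P x - P u)) D x := by
    intro x hx
    have h := ((hG1 x hx).const_mul ε).sub ((hF1 x hx).const_mul c)
    simp only [hχdef]
    refine h.congr_deriv ?_
    have hx' := hF'ne x hx
    have hu' := hF'ne u hu
    rcases hεv with rfl | rfl <;> rcases hδv with rfl | rfl <;>
      simp only [hPdef, hcdef] <;> field_simp <;> ring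
  have hχc : ContinuousOn χ D := fun x hx => (hχderiv x hx).continuousWithinAt
  -- χ has a minimum at u on D
  have hχmin : ∀ x ∈ D, χ u ≤ χ x := by
    intro x hx
    rcases le_total u x with hux | hxu
    · have hconv : Convex ℝ (D ∩ Ici u) := hD.inter (convex_Ici u)
      have hmono : MonotoneOn χ (D ∩ Ici u) := by
        refine monotoneOn_of_hasDerivWithinAt_nonneg hconv (hχc.mono inter_subset_left)
          (fun y hy => ((hχderiv y (interior_subset hy).1).mono
            (interior_subset.trans inter_subset_left)) ) ?_
        intro y hy
        have hyD : y ∈ D := (interior_subset hy).1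
        have hyu : u ≤ y := (interior_subset hy).2
        exact mul_nonneg (hFs y hyD).le (sub_nonneg.2 (hPmono hu hyD hyu))
      exact hmono ⟨hu, self_mem_Ici⟩ ⟨hx, hux⟩ hux
    · have hconv : Convex ℝ (D ∩ Iic u) := hD.inter (convex_Iic u)
      have hanti : AntitoneOn χ (D ∩ Iic u) := by
        refine antitoneOn_of_hasDerivWithinAt_nonpos hconv (hχc.mono inter_subset_left)
          (fun y hy => ((hχderiv y (interior_subset hy).1).mono
            (interior_subset.trans inter_subset_left)) ) ?_
        intro y hy
        have hyD : y ∈ D := (interior_subset hy).1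
        have hyu : y ≤ u := (interior_subset hy).2
        exact mul_nonpos_iff.2 (Or.inl ⟨(hFs y hyD).le, sub_nonpos.2 (hPmono hyD hu hyu)⟩)
      exact hanti ⟨hx, hxu⟩ ⟨hu, self_mem_Iic⟩ hxu
  -- ε * G is strictly monotone on D
  have hεG : StrictMonoOn (fun x => ε * G x) D := by
    refine strictMonoOn_of_hasDerivWithinAt_pos hD (continuousOn_const.mul hGc)
      (fun x hx => ((hG1 x (interior_subset hx)).const_mul ε).mono interior_subset) ?_
    exact fun x hx => hGs x (interior_subset hx)
  have hSF : ∑ i, F (a i) = F u * ((k+1 : ℕ) : ℝ) := by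
    rw [huF, hmF, div_mul_cancel₀ _ hn.ne']
  have hsum_expand : ∑ i, χ (a i)
      = ε * (∑ i, G (a i)) - c * (F u * ((k+1 : ℕ) : ℝ)) := by
    simp only [hχdef]
    rw [Finset.sum_sub_distrib, ← Finset.mul_sum, ← Finset.mul_sum, hSF]
  have hεGv : ε * G v = ε * (∑ i, G (a i)) / ((k+1 : ℕ) : ℝ) := by
    rw [hvG, hmG]; ring
  -- nonstrict conclusion
  have huv : u ≤ v := by
    have h1 : ∑ _i : Fin (k+1), χ u ≤ ∑ i, χ (a i) :=
      Finset.sum_le_sum (fun i _ => hχmin (a i) (ha i))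
    have h2 : ∑ _i : Fin (k+1), χ u = ((k+1 : ℕ) : ℝ) * χ u := by
      simp [Finset.sum_const, Finset.card_univ, nsmul_eq_mul]
    have hχu : χ u = ε * G u - c * F u := rfl
    rw [h2, hsum_expand, hχu] at h1
    have key : ε * G u * ((k+1 : ℕ) : ℝ) ≤ ε * (∑ i, G (a i)) := by nlinarith [h1]
    have hle : ε * G u ≤ ε * G v := by
      rw [hεGv, le_div_iff₀ hn]; exact key
    by_contra hvu
    push_neg at hvu
    exact absurd (hεG hv hu hvu) (not_lt.2 hle)
  refine ⟨huv, ?_⟩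
  -- strict part
  intro hrs hij
  have hPs : StrictMonoOn P D := by
    refine strictMonoOn_of_hasDerivWithinAt_pos hD hPc
      (fun x hx => (hPderiv x (interior_subset hx)).mono interior_subset) ?_
    intro x hx
    exact mul_pos (hPpos x (interior_subset hx))
      (sub_pos.2 (hrs x (interior_subset hx)))
  have hχstrict : ∀ x ∈ D, x ≠ u → χ u < χ x := by
    intro x hx hxu
    rcases lt_or_gt_of_ne hxu with hlt | hgt
    · have hconv : Convex ℝ (D ∩ Iic u) := hD.inter (convex_Iic u)
      have hanti : StrictAntiOn χ (D ∩ Iic u) := by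
        refine strictAntiOn_of_hasDerivWithinAt_neg hconv (hχc.mono inter_subset_left)
          (fun y hy => ((hχderiv y (interior_subset hy).1).mono
            (interior_subset.trans inter_subset_left))) ?_
        intro y hy
        rw [interior_inter] at hy
        have hyD : y ∈ D := interior_subset hy.1
        have hyu : y < u := by simpa using hy.2
        exact mul_neg_of_pos_of_neg (hFs y hyD) (sub_neg.2 (hPs hyD hu hyu))
      exact hanti ⟨hx, hlt.le⟩ ⟨hu, self_mem_Iic⟩ hlt
    · have hconv : Convex ℝ (D ∩ Ici u) := hD.inter (convex_Ici u)
      have hmono : StrictMonoOn χ (D ∩ Ici u) := by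
        refine strictMonoOn_of_hasDerivWithinAt_pos hconv (hχc.mono inter_subset_left)
          (fun y hy => ((hχderiv y (interior_subset hy).1).mono
            (interior_subset.trans inter_subset_left))) ?_
        intro y hy
        rw [interior_inter] at hy
        have hyD : y ∈ D := interior_subset hy.1
        have hyu : u < y := by simpa using hy.2
        exact mul_pos (hFs y hyD) (sub_pos.2 (hPs hu hyD hyu))
      exact hmono ⟨hu, self_mem_Ici⟩ ⟨hx, hgt.le⟩ hgt
  obtain ⟨i, j, hijne⟩ := hij
  have hex : ∃ i₂, a i₂ ≠ u := by
    by_cases h : a i = u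
    · exact ⟨j, fun hh => hijne (h.trans hh.symm)⟩
    · exact ⟨i, h⟩
  obtain ⟨i₂, hi₂⟩ := hex
  have h1 : ∑ _i : Fin (k+1), χ u < ∑ i, χ (a i) := by
    refine Finset.sum_lt_sum (fun i _ => hχmin (a i) (ha i)) ⟨i₂, Finset.mem_univ i₂, ?_⟩
    exact hχstrict (a i₂) (ha i₂) hi₂
  have h2 : ∑ _i : Fin (k+1), χ u = ((k+1 : ℕ) : ℝ) * χ u := by
    simp [Finset.sum_const, Finset.card_univ, nsmul_eq_mul]
  have hχu : χ u = ε * G u - c * F u := rfl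
  rw [h2, hsum_expand, hχu] at h1
  have key : ε * G u * ((k+1 : ℕ) : ℝ) < ε * (∑ i, G (a i)) := by nlinarith [h1]
  have hlt : ε * G u < ε * G v := by
    rw [hεGv, lt_div_iff₀ hn]; exact key
  suffices h : u < v by exact h
  by_contra hvu
  push_neg at hvu
  rcases eq_or_lt_of_le hvu with heq | hlt2
  · rw [heq] at hlt; exact lt_irrefl _ hlt
  · exact absurd (hεG hv hu hlt2) (not_lt.2 hlt.le)

lemma qa_invFunOn_eq' {k : ℕ} {D I : Set ℝ} (hDI : D ⊆ I) {F : ℝ → ℝ} (hinj : Set.InjOn F I)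
    (a : Fin (k+1) → ℝ) (hm : (∑ i, F (a i)) / ((k+1 : ℕ) : ℝ) ∈ F '' D) :
    qaMean D F a = qaMean I F a := by
  unfold qaMean
  have h1 : ∃ x ∈ D, F x = (∑ i, F (a i)) / ((k+1 : ℕ) : ℝ) := by rwa [Set.mem_image] at hm
  have h2 : ∃ x ∈ I, F x = (∑ i, F (a i)) / ((k+1 : ℕ) : ℝ) := by
    obtain ⟨x, hx, hfx⟩ := h1; exact ⟨x, hDI hx, hfx⟩
  refine hinj (hDI (Function.invFunOn_mem h1)) (Function.invFunOn_mem h2) ?_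
  rw [Function.invFunOn_eq h1, Function.invFunOn_eq h2]

lemma sign_lemma' {I : Set ℝ} (hc : Convex ℝ I) {h : ℝ → ℝ} (hcont : ContinuousOn h I)
    (hne : ∀ x ∈ I, h x ≠ 0) : ∃ ε : ℝ, (ε = 1 ∨ ε = -1) ∧ ∀ x ∈ I, 0 < ε * h x := by
  by_cases hp : ∀ x ∈ I, 0 < h x
  · exact ⟨1, Or.inl rfl, fun x hx => by rw [one_mul]; exact hp x hx⟩
  · refine ⟨-1, Or.inr rfl, fun x hx => ?_⟩
    rw [neg_one_mul, neg_pos]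
    push_neg at hp
    obtain ⟨p, hpI, hple⟩ := hp
    have hplt : h p < 0 := lt_of_le_of_ne hple (hne p hpI)
    by_contra hxx
    push_neg at hxx
    have hxlt : 0 < h x := lt_of_le_of_ne hxx (Ne.symm (hne x hx))
    have hJ : OrdConnected (h '' I) :=
      ((Real.convex_iff_isPreconnected.1 hc).image h hcont).ordConnected
    obtain ⟨z, hz, hz0⟩ :=
      hJ.out (Set.mem_image_of_mem h hpI) (Set.mem_image_of_mem h hx) ⟨hplt.le, hxlt.le⟩
    exact hne z hz hz0

/-- For twice continuously differentiable `F, G` on `I` with nowhere vanishing first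
derivatives, `A[F] ≤ A[G]` on all tuples iff `F''/F' ≤ G''/G'` on `I`. -/
theorem stmt_17 (I : Set ℝ) (hI : I.OrdConnected) (hInt : I.Nontrivial)
    (F F' F'' G G' G'' : ℝ → ℝ)
    (hF1 : ∀ x ∈ I, HasDerivWithinAt F (F' x) I x)
    (hF2 : ∀ x ∈ I, HasDerivWithinAt F' (F'' x) I x)
    (hF2c : ContinuousOn F'' I)
    (hF'ne : ∀ x ∈ I, F' x ≠ 0)
    (hG1 : ∀ x ∈ I, HasDerivWithinAt G (G' x) I x)
    (hG2 : ∀ x ∈ I, HasDerivWithinAt G' (G'' x) I x)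
    (hG2c : ContinuousOn G'' I)
    (hG'ne : ∀ x ∈ I, G' x ≠ 0) :
    (∀ (k : ℕ) (a : Fin (k + 1) → ℝ), (∀ i, a i ∈ I) →
      qaMean I F a ≤ qaMean I G a) ↔
    (∀ x ∈ I, F'' x / F' x ≤ G'' x / G' x) := by
  have hIc : Convex ℝ I := convex_iff_ordConnected.2 hI
  have hF'c : ContinuousOn F' I := fun x hx => (hF2 x hx).continuousWithinAt
  have hG'c : ContinuousOn G' I := fun x hx => (hG2 x hx).continuousWithinAt
  obtain ⟨δ, hδv, hδ⟩ := sign_lemma' hIc hF'c hF'ne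
  obtain ⟨ε, hεv, hε⟩ := sign_lemma' hIc hG'c hG'ne
  constructor
  · -- necessity
    intro hmeans x₀ hx₀
    by_contra hcon
    push_neg at hcon
    set rr : ℝ → ℝ := fun x => F'' x / F' x - G'' x / G' x with hrrdef
    have hrrc : ContinuousOn rr I := (hF2c.div hF'c hF'ne).sub (hG2c.div hG'c hG'ne)
    have h0 : 0 < rr x₀ := sub_pos.2 hcon
    have hev : rr ⁻¹' (Ioi 0) ∈ 𝓝[I] x₀ := hrrc x₀ hx₀ (Ioi_mem_nhds h0)
    obtain ⟨η, hη, hsub⟩ := Metric.mem_nhdsWithin_iff.1 hev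
    set D : Set ℝ := I ∩ Icc (x₀ - η/2) (x₀ + η/2) with hDdef
    have hDI : D ⊆ I := inter_subset_left
    have hDc : Convex ℝ D := hIc.inter (convex_Icc _ _)
    have hDpos : ∀ x ∈ D, G'' x / G' x < F'' x / F' x := by
      intro x hx
      have hx2 := hx.2
      rw [mem_Icc] at hx2
      have hball : x ∈ Metric.ball x₀ η ∩ I := by
        refine ⟨?_, hx.1⟩
        rw [Metric.mem_ball, Real.dist_eq]
        exact abs_lt.2 ⟨by linarith [hx2.1], by linarith [hx2.2]⟩
      have := hsub hball
      exact sub_pos.1 this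
    have hx₀D : x₀ ∈ D := ⟨hx₀, mem_Icc.2 ⟨by linarith, by linarith⟩⟩
    obtain ⟨y, hyI, hyne⟩ : ∃ y ∈ I, y ≠ x₀ := by
      obtain ⟨p, hp, q, hq, hpq⟩ := hInt
      by_cases hpx : p = x₀
      · exact ⟨q, hq, fun h => hpq (by rw [hpx, h])⟩
      · exact ⟨p, hp, hpx⟩
    obtain ⟨z, hzD, hzne⟩ : ∃ z ∈ D, z ≠ x₀ := by
      rcases lt_or_gt_of_ne hyne with hlt | hgt
      · set m := min (η/2) (x₀ - y) with hm
        have hm0 : 0 < m := lt_min (by linarith) (by linarith)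
        have hm1 : m ≤ η/2 := min_le_left _ _
        have hm2 : m ≤ x₀ - y := min_le_right _ _
        refine ⟨x₀ - m/2, ⟨?_, mem_Icc.2 ⟨by linarith, by linarith⟩⟩, fun h => by linarith⟩
        exact hI.out hyI hx₀ (mem_Icc.2 ⟨by linarith, by linarith⟩)
      · set m := min (η/2) (y - x₀) with hm
        have hm0 : 0 < m := lt_min (by linarith) (by linarith)
        have hm1 : m ≤ η/2 := min_le_left _ _
        have hm2 : m ≤ y - x₀ := min_le_right _ _
        refine ⟨x₀ + m/2, ⟨?_, mem_Icc.2 ⟨by linarith, by linarith⟩⟩, fun h => by linarith⟩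
        exact hI.out hx₀ hyI (mem_Icc.2 ⟨by linarith, by linarith⟩)
    set a : Fin 2 → ℝ := ![x₀, z] with hadef
    have haD : ∀ i, a i ∈ D := by
      intro i
      fin_cases i
      · simpa [hadef] using hx₀D
      · simpa [hadef] using hzD
    have hcore := qa_core' D hDc G G' G'' F F' F'' δ ε hδv hεv
      (fun x hx => (hG1 x (hDI hx)).mono hDI) (fun x hx => (hG2 x (hDI hx)).mono hDI)
      (fun x hx => (hF1 x (hDI hx)).mono hDI) (fun x hx => (hF2 x (hDI hx)).mono hDI)
      (fun x hx => hε x (hDI hx)) (fun x hx => hδ x (hDI hx))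
      (fun x hx => (hDpos x hx).le) a haD
    have hane : a 0 ≠ a 1 := by
      simp only [hadef, Matrix.cons_val_zero, Matrix.cons_val_one, Matrix.head_cons]
      exact hzne.symm
    have hstrict := hcore.2 hDpos ⟨0, 1, hane⟩
    have hFcD : ContinuousOn F D := fun x hx => ((hF1 x (hDI hx)).mono hDI).continuousWithinAt
    have hGcD : ContinuousOn G D := fun x hx => ((hG1 x (hDI hx)).mono hDI).continuousWithinAt
    have hinjF : Set.InjOn F I := by
      have hsm : StrictMonoOn (fun x => δ * F x) I :=
        strictMonoOn_of_hasDerivWithinAt_pos hIc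
          (continuousOn_const.mul (fun x hx => (hF1 x hx).continuousWithinAt))
          (fun x hx => ((hF1 x (interior_subset hx)).const_mul δ).mono interior_subset)
          (fun x hx => hδ x (interior_subset hx))
      intro x hx y hy hxy
      exact hsm.injOn hx hy (by rw [hxy])
    have hinjG : Set.InjOn G I := by
      have hsm : StrictMonoOn (fun x => ε * G x) I :=
        strictMonoOn_of_hasDerivWithinAt_pos hIc
          (continuousOn_const.mul (fun x hx => (hG1 x hx).continuousWithinAt))
          (fun x hx => ((hG1 x (interior_subset hx)).const_mul ε).mono interior_subset)
          (fun x hx => hε x (interior_subset hx))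
      intro x hx y hy hxy
      exact hsm.injOn hx hy (by rw [hxy])
    have heqF : qaMean D F a = qaMean I F a :=
      qa_invFunOn_eq' hDI hinjF a (mean_mem_image' hDc hFcD a haD)
    have heqG : qaMean D G a = qaMean I G a :=
      qa_invFunOn_eq' hDI hinjG a (mean_mem_image' hDc hGcD a haD)
    have hle := hmeans 1 a (fun i => hDI (haD i))
    rw [← heqF, ← heqG] at hle
    exact absurd hle (not_le.2 hstrict)
  · -- sufficiency
    intro hr k a ha
    exact (qa_core' I hIc F F' F'' G G' G'' ε δ hεv hδv hF1 hF2 hG1 hG2 hδ hε hr a ha).1
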